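/- Cross-arm covariance identity in the Hajek linearization (key computation of Lemma 3): Writing μ̄¹ = (1/N) Σ_{i=1}^N E[μ_i^{(1)}(Z)] and μ̄⁰ = (1/N) Σ_{i=1}^N E[μ_i^{(0)}(Z)], the following exact identity holds under the Bernoulli design alone: N · Cov[(1/(Np)) Σ_{i=1}^N Z_i (μ_i(Z) − μ̄¹), (1/(N(1−p))) Σ_{j=1}^N (1−Z_j)(μ_j(Z) − μ̄⁰)] = (1/N) Σ_{i=1}^N Σ_{j≠i} E[(μ_i(Z[i:=1][j:=0]) − μ̄¹)(μ_j(Z[i:=1][j:=0]) − μ̄⁰)] − (1/N) Σ_{i=1}^N Σ_{j=1}^N (E[μ_i^{(1)}(Z)] − μ̄¹)(E[μ_j^{(0)}(Z)] − μ̄⁰). -/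

import Mathlib

/-- Expectation with respect to the Bernoulli(p) product measure on `{0,1}^N`. -/
noncomputable def bexp {N : ℕ} (p : ℝ) (f : (Fin N → Bool) → ℝ) : ℝ :=
  ∑ z : Fin N → Bool, (∏ i, if z i then p else 1 - p) * f z

/-- Covariance under the Bernoulli(p) product measure. -/
noncomputable def bcov {N : ℕ} (p : ℝ) (f g : (Fin N → Bool) → ℝ) : ℝ :=
  bexp p (fun z => f z * g z) - bexp p f * bexp p g

section helpers

variable {N : ℕ} {p : ℝ}

lemma bexp_congr {f g : (Fin N → Bool) → ℝ} (h : ∀ z, f z = g z) :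
    bexp p f = bexp p g := by
  unfold bexp; exact Finset.sum_congr rfl fun z _ => by rw [h]

lemma bexp_sum {ι : Type*} (s : Finset ι) (f : ι → (Fin N → Bool) → ℝ) :
    bexp p (fun z => ∑ i ∈ s, f i z) = ∑ i ∈ s, bexp p (f i) := by
  simp only [bexp, Finset.mul_sum]
  rw [Finset.sum_comm]

lemma bexp_const_mul (c : ℝ) (f : (Fin N → Bool) → ℝ) :
    bexp p (fun z => c * f z) = c * bexp p f := by
  simp only [bexp, Finset.mul_sum]
  congr 1; ext z; ring

lemma bexp_const (c : ℝ) : bexp p (fun _ : Fin N → Bool => c) = c := by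
  simp only [bexp, ← Finset.sum_mul]
  rw [← Fintype.prod_sum (fun (_ : Fin N) (b : Bool) => if b then p else 1 - p)]
  simp

lemma bexp_sub_const (f : (Fin N → Bool) → ℝ) (c : ℝ) :
    bexp p (fun z => f z - c) = bexp p f - c := by
  have : bexp p (fun z => f z - c) = bexp p f - bexp p (fun _ : Fin N → Bool => c) := by
    simp only [bexp, mul_sub, Finset.sum_sub_distrib]
  rw [this, bexp_const]

lemma bexp_indic (i : Fin N) (a : Bool) (f : (Fin N → Bool) → ℝ) :
    bexp p (fun z => (if z i = a then (1:ℝ) else 0) * f z)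
      = (if a then p else 1 - p) * bexp p (fun z => f (Function.update z i a)) := by
  classical
  set w : Bool → ℝ := fun b => if b then p else 1 - p with hw
  set E : Bool × ({ j // j ≠ i } → Bool) → (Fin N → Bool) :=
    fun x => (Equiv.funSplitAt i Bool).symm x with hE
  have hEi : ∀ b g, E (b, g) i = b := by
    intro b g; simp [hE, Equiv.funSplitAt, Equiv.piSplitAt]
  have hEk : ∀ b g (k : Fin N) (h : k ≠ i), E (b, g) k = g ⟨k, h⟩ := by
    intro b g k h; simp [hE, Equiv.funSplitAt, Equiv.piSplitAt, h]
  have hW : ∀ b g, (∏ k, w (E (b, g) k)) = w b * ∏ k : { j // j ≠ i }, w (g k) := by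
    intro b g
    rw [← Finset.mul_prod_erase Finset.univ _ (Finset.mem_univ i), hEi]
    congr 1
    rw [Finset.prod_subtype (Finset.univ.erase i) (p := fun k => k ≠ i)
      (fun k => by simp [Finset.mem_erase]) (fun k => w (E (b, g) k))]
    exact Finset.prod_congr rfl fun k _ => by rw [hEk _ _ _ k.2]
  have key : ∀ F : (Fin N → Bool) → ℝ,
      bexp p F = ∑ b : Bool, ∑ g : { j // j ≠ i } → Bool,
        (w b * ∏ k : { j // j ≠ i }, w (g k)) * F (E (b, g)) := by
    intro F
    rw [bexp, ← (Equiv.funSplitAt i Bool).symm.sum_comp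
      (fun z => (∏ k, w (z k)) * F z), Fintype.sum_prod_type]
    exact Finset.sum_congr rfl fun b _ => Finset.sum_congr rfl fun g _ => by rw [hW]
  have hupd : ∀ b g, Function.update (E (b, g)) i a = E (a, g) := by
    intro b g; funext k
    by_cases h : k = i
    · subst h; simp [hEi]
    · simp [Function.update_of_ne h, hEk _ _ _ h]
  rw [key, key]
  simp only [hEi, hupd]
  rw [Fintype.sum_bool, Fintype.sum_bool]
  cases a <;>
    · simp only [hw, if_true, if_false, reduceIte, one_mul, mul_zero, mul_one, zero_mul,
        Finset.sum_const_zero, add_zero, zero_add]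
      rw [← Finset.sum_add_distrib, ← Finset.sum_add_distrib, Finset.mul_sum]
      refine Finset.sum_congr rfl fun g _ => ?_
      norm_num
      ring

lemma bexp_ind1 (i : Fin N) (u : (Fin N → Bool) → ℝ) :
    bexp p (fun z => (if z i then (1:ℝ) else 0) * u z)
      = p * bexp p (fun z => u (Function.update z i true)) := by
  simpa using bexp_indic i true u

lemma bexp_ind0 (j : Fin N) (u : (Fin N → Bool) → ℝ) :
    bexp p (fun z => (1 - if z j then (1:ℝ) else 0) * u z)
      = (1 - p) * bexp p (fun z => u (Function.update z j false)) := by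
  have e : ∀ z : Fin N → Bool, (1 - if z j then (1:ℝ) else 0) * u z
      = (if z j = false then (1:ℝ) else 0) * u z := by
    intro z; cases h : z j <;> simp [h]
  rw [bexp_congr e]
  simpa using bexp_indic j false u

lemma bexp_diag (i : Fin N) (u v : (Fin N → Bool) → ℝ) :
    bexp p (fun z => ((if z i then (1:ℝ) else 0) * u z)
      * ((1 - if z i then (1:ℝ) else 0) * v z)) = 0 := by
  have e : ∀ z : Fin N → Bool, ((if z i then (1:ℝ) else 0) * u z)
      * ((1 - if z i then (1:ℝ) else 0) * v z) = 0 := by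
    intro z; cases h : z i <;> simp [h]
  rw [bexp_congr e]
  exact bexp_const 0

lemma bexp_cross (i j : Fin N) (hij : j ≠ i) (u v : (Fin N → Bool) → ℝ) :
    bexp p (fun z => ((if z i then (1:ℝ) else 0) * u z)
        * ((1 - if z j then (1:ℝ) else 0) * v z))
      = p * ((1 - p) * bexp p (fun z =>
          u (Function.update (Function.update z i true) j false)
            * v (Function.update (Function.update z i true) j false))) := by
  have e1 : ∀ z : Fin N → Bool, ((if z i then (1:ℝ) else 0) * u z)
      * ((1 - if z j then (1:ℝ) else 0) * v z)
      = (if z i = true then (1:ℝ) else 0) * ((if z j = false then (1:ℝ) else 0) * (u z * v z)) := by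
    intro z; cases h1 : z i <;> cases h2 : z j <;> simp [h1, h2] <;> ring
  rw [bexp_congr e1, bexp_indic i true]
  have e2 : ∀ z : Fin N → Bool,
      (if Function.update z i true j = false then (1:ℝ) else 0)
          * (u (Function.update z i true) * v (Function.update z i true))
      = (if z j = false then (1:ℝ) else 0)
          * (u (Function.update z i true) * v (Function.update z i true)) := by
    intro z; rw [Function.update_of_ne hij]
  rw [bexp_congr e2, bexp_indic j false]
  have e3 : ∀ z : Fin N → Bool,
      u (Function.update (Function.update z j false) i true)
          * v (Function.update (Function.update z j false) i true)
      = u (Function.update (Function.update z i true) j false)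
          * v (Function.update (Function.update z i true) j false) := by
    intro z; rw [Function.update_comm hij]
  rw [bexp_congr e3]
  simp

end helpers

/-- Cross-arm covariance identity in the Hajek linearization (key computation of Lemma 3),
which holds under the Bernoulli design alone. -/
theorem hajek_cross_arm_covariance
    (N : ℕ) (hN : 1 ≤ N) (p : ℝ) (hp0 : 0 < p) (hp1 : p < 1)
    (μ : Fin N → (Fin N → Bool) → ℝ)
    (mu1 mu0 : ℝ)
    (hmu1 : mu1 = (1 / N) * ∑ i, bexp p (fun z => μ i (Function.update z i true)))
    (hmu0 : mu0 = (1 / N) * ∑ i, bexp p (fun z => μ i (Function.update z i false))) :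
    (N : ℝ) * bcov p
        (fun z => (1 / (N * p)) * ∑ i, (if z i then (1 : ℝ) else 0) * (μ i z - mu1))
        (fun z => (1 / (N * (1 - p))) *
          ∑ j, (1 - if z j then (1 : ℝ) else 0) * (μ j z - mu0))
      = (1 / N) * ∑ i, ∑ j ∈ Finset.univ.erase i,
          bexp p (fun z =>
            (μ i (Function.update (Function.update z i true) j false) - mu1)
              * (μ j (Function.update (Function.update z i true) j false) - mu0))
        - (1 / N) * ∑ i, ∑ j : Fin N,
            (bexp p (fun z => μ i (Function.update z i true)) - mu1)
              * (bexp p (fun z => μ j (Function.update z j false)) - mu0) := by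
  classical
  have hNR : (N : ℝ) ≠ 0 := Nat.cast_ne_zero.2 (by omega)
  have hpne : p ≠ 0 := ne_of_gt hp0
  have hqne : (1 : ℝ) - p ≠ 0 := by linarith
  set c1 : ℝ := 1 / (N * p)
  set c0 : ℝ := 1 / (N * (1 - p))
  set E : Fin N → Fin N → ℝ := fun i j => bexp p (fun z =>
      (μ i (Function.update (Function.update z i true) j false) - mu1)
        * (μ j (Function.update (Function.update z i true) j false) - mu0)) with hEdef
  set A : Fin N → ℝ := fun i => bexp p (fun z => μ i (Function.update z i true)) with hA
  set B : Fin N → ℝ := fun j => bexp p (fun z => μ j (Function.update z j false)) with hB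
  -- expectation of the product
  have hprod : bexp p (fun z =>
      ((c1) * ∑ i, (if z i then (1 : ℝ) else 0) * (μ i z - mu1))
        * ((c0) * ∑ j, (1 - if z j then (1 : ℝ) else 0) * (μ j z - mu0)))
      = (c1 * c0) * ∑ i, ∑ j ∈ Finset.univ.erase i, p * ((1 - p) * E i j) := by
    have e : ∀ z : Fin N → Bool,
        ((c1) * ∑ i, (if z i then (1 : ℝ) else 0) * (μ i z - mu1))
          * ((c0) * ∑ j, (1 - if z j then (1 : ℝ) else 0) * (μ j z - mu0))
        = (c1 * c0) * ∑ i, ∑ j, ((if z i then (1 : ℝ) else 0) * (μ i z - mu1))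
            * ((1 - if z j then (1 : ℝ) else 0) * (μ j z - mu0)) := by
      intro z
      rw [mul_mul_mul_comm, Finset.sum_mul_sum]
    rw [bexp_congr e, bexp_const_mul]
    congr 1
    rw [bexp_sum]
    refine Finset.sum_congr rfl fun i _ => ?_
    rw [bexp_sum]
    rw [← Finset.add_sum_erase _ _ (Finset.mem_univ i)]
    rw [bexp_diag, zero_add]
    exact Finset.sum_congr rfl fun j hj =>
      bexp_cross i j (Finset.ne_of_mem_erase hj) _ _
  -- expectations of the two factors
  have hF : bexp p (fun z =>
      (c1) * ∑ i, (if z i then (1 : ℝ) else 0) * (μ i z - mu1))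
      = c1 * (p * ∑ i, (A i - mu1)) := by
    rw [bexp_const_mul]
    congr 1
    rw [bexp_sum, Finset.mul_sum]
    refine Finset.sum_congr rfl fun i _ => ?_
    rw [bexp_ind1]
    congr 1
    exact bexp_sub_const _ _
  have hG : bexp p (fun z =>
      (c0) * ∑ j, (1 - if z j then (1 : ℝ) else 0) * (μ j z - mu0))
      = c0 * ((1 - p) * ∑ j, (B j - mu0)) := by
    rw [bexp_const_mul]
    congr 1
    rw [bexp_sum, Finset.mul_sum]
    refine Finset.sum_congr rfl fun j _ => ?_
    rw [bexp_ind0]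
    congr 1
    exact bexp_sub_const _ _
  rw [bcov]
  rw [hprod, hF, hG]
  have hsum2 : ∑ i, ∑ j : Fin N, (A i - mu1) * (B j - mu0)
      = (∑ i, (A i - mu1)) * (∑ j, (B j - mu0)) := (Finset.sum_mul_sum _ _ _ _).symm
  rw [hsum2]
  have hpull : ∑ i, ∑ j ∈ Finset.univ.erase i, p * ((1 - p) * E i j)
      = (p * (1 - p)) * ∑ i, ∑ j ∈ Finset.univ.erase i, E i j := by
    rw [Finset.mul_sum]
    refine Finset.sum_congr rfl fun i _ => ?_
    rw [Finset.mul_sum]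
    exact Finset.sum_congr rfl fun j _ => by ring
  rw [hpull]
  set X : ℝ := ∑ i, ∑ j ∈ Finset.univ.erase i, E i j
  set SA : ℝ := ∑ i, (A i - mu1)
  set SB : ℝ := ∑ j, (B j - mu0)
  field_simp [c1, c0]
  simp only [c1, c0]
  field_simp
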